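/- Let k be a commutative ring, A a commutative associative k-algebra, and μ₁, μ₂ : A × A → A k-bilinear maps. Suppose the product on A ⊕ A ⊕ A (representing A[t]/(t³)) given by a ⋆ b = ab + t·μ₁(a,b) + t²·μ₂(a,b), extended t-linearly, is associative. Define B(a,b) := μ₁(a,b) − μ₁(b,a). Then B is a Poisson bracket on A: it is skew-symmetric, satisfies the Leibniz rule B(a, bc) = B(a,b)·c + b·B(a,c), and satisfies the Jacobi identity B(a, B(b,c)) + B(b, B(c,a)) + B(c, B(a,b)) = 0 for all a, b, c ∈ A. -/
import Mathlib


/-- the skew-symmetrization of the first-order term of an associative star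
product (truncated at order t³, elements `a₀ + a₁ t + a₂ t²` represented as triples) is a
Poisson bracket on the underlying commutative algebra. -/
theorem star_product_first_order_term_is_poisson {k A : Type*} [CommRing k] [CommRing A]
    [Algebra k A] (μ₁ μ₂ : A →ₗ[k] A →ₗ[k] A)
    (star : A × A × A → A × A × A → A × A × A)
    (hstar : ∀ p q : A × A × A,
      star p q = (p.1 * q.1,
        p.1 * q.2.1 + p.2.1 * q.1 + μ₁ p.1 q.1,
        p.1 * q.2.2 + p.2.1 * q.2.1 + p.2.2 * q.1 + μ₁ p.1 q.2.1 + μ₁ p.2.1 q.1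
          + μ₂ p.1 q.1))
    (hassoc : ∀ p q r : A × A × A, star (star p q) r = star p (star q r))
    (B : A → A → A) (hB : ∀ a b : A, B a b = μ₁ a b - μ₁ b a) :
    (∀ a b : A, B a b = -B b a) ∧
    (∀ a b c : A, B a (b * c) = B a b * c + b * B a c) ∧
    (∀ a b c : A, B a (B b c) + B b (B c a) + B c (B a b) = 0) := by
  have key : ∀ a b c : A,
      (μ₁ a b * c + μ₁ (a * b) c = a * μ₁ b c + μ₁ a (b * c)) ∧
      (μ₂ a b * c + μ₁ (μ₁ a b) c + μ₂ (a * b) c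
        = a * μ₂ b c + μ₁ a (μ₁ b c) + μ₂ a (b * c)) := by
    intro a b c
    have h := hassoc (a, 0, 0) (b, 0, 0) (c, 0, 0)
    simp only [hstar] at h
    simp only [Prod.mk.injEq, map_zero, LinearMap.zero_apply, mul_zero, zero_mul,
      add_zero, zero_add] at h
    exact ⟨h.2.1, h.2.2⟩
  have E2 := fun a b c => (key a b c).1
  have E3 := fun a b c => (key a b c).2
  refine ⟨fun a b => by rw [hB, hB]; ring, fun a b c => ?_, fun a b c => ?_⟩
  · rw [hB, hB, hB]
    have h1 : μ₁ (b * a) c = μ₁ (a * b) c := by rw [mul_comm]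
    have h2 : μ₁ b (a * c) = μ₁ b (c * a) := by rw [mul_comm]
    linear_combination -E2 a b c + E2 b a c - E2 b c a - h1 + h2
  · simp only [hB, map_sub, LinearMap.sub_apply]
    have p1 : μ₂ (b * a) c = μ₂ (a * b) c := by rw [mul_comm]
    have p2 : μ₂ (c * b) a = μ₂ (b * c) a := by rw [mul_comm]
    have p3 : μ₂ (a * c) b = μ₂ (c * a) b := by rw [mul_comm]
    have q1 : μ₂ a (c * b) = μ₂ a (b * c) := by rw [mul_comm]
    have q2 : μ₂ b (a * c) = μ₂ b (c * a) := by rw [mul_comm]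
    have q3 : μ₂ c (b * a) = μ₂ c (a * b) := by rw [mul_comm]
    linear_combination -E3 a b c + E3 b a c - E3 b c a + E3 c b a - E3 c a b + E3 a c b
      - p1 - p2 - p3 + q1 + q2 + q3
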